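/- The finite subgroups of 𝕋^ℕ with finite support are dense in the space 𝒮(𝕋^ℕ) of compact subgroups of 𝕋^ℕ with the Hausdorff metric. That is, for every compact subgroup K ≤ 𝕋^ℕ and ε > 0 there exists a finite subgroup F ≤ 𝕋^ℕ, supported on finitely many coordinates, with Hausdorff distance d_H(F, K) < ε. -/

import Mathlib

attribute [local instance] PiCountable.metricSpace

open Metric Set

namespace FSD

noncomputable section

abbrev Tinf := ∀ _ : ℕ, AddCircle (1 : ℝ)

lemma dist_eq (x y : Tinf) :
    dist x y = ∑' i : ℕ, min ((1 / 2) ^ i : ℝ) (dist (x i) (y i)) := by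
  rw [PiCountable.dist_eq_tsum]
  simp [Encodable.encode_nat]

lemma summable_min (x y : Tinf) :
    Summable fun i : ℕ => min ((1 / 2) ^ i : ℝ) (dist (x i) (y i)) :=
  Summable.of_nonneg_of_le (fun i => le_min (by positivity) dist_nonneg)
    (fun i => min_le_left _ _) summable_geometric_two

lemma dist_add_left_pi (a x y : Tinf) : dist (a + x) (a + y) = dist x y := by
  rw [dist_eq, dist_eq]
  exact tsum_congr fun i => by rw [show (a+x) i = a i + x i from rfl,
    show (a+y) i = a i + y i from rfl, dist_add_left]

lemma dist_add_add_le (x y z w : Tinf) : dist (x + y) (z + w) ≤ dist x z + dist y w := by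
  have h1 : dist (x + y) (z + y) = dist x z := by
    rw [add_comm x y, add_comm z y, dist_add_left_pi]
  have h2 : dist (z + y) (z + w) = dist y w := dist_add_left_pi _ _ _
  calc dist (x + y) (z + w) ≤ dist (x + y) (z + y) + dist (z + y) (z + w) := dist_triangle _ _ _
    _ = dist x z + dist y w := by rw [h1, h2]

lemma tsum_tail (N : ℕ) :
    ∑' n : ℕ, (if n < N then 0 else (1/2 : ℝ)^n) = 2 * (1/2)^N := by
  have h1 : ∑' n : ℕ, ((1/2 : ℝ)^(N + n)) = (1/2)^N * 2 := by
    simp_rw [pow_add]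
    rw [tsum_mul_left, tsum_geometric_two]
  have h2 : ∑' n : ℕ, (if n < N then 0 else (1/2 : ℝ)^n)
      = ∑' n : ℕ, ((1/2 : ℝ)^(N + n)) := by
    apply tsum_eq_tsum_of_ne_zero_bij (fun n => N + (n : ℕ))
    · rintro ⟨a, _⟩ ⟨b, _⟩ h
      simp only [Subtype.mk.injEq]
      exact Nat.add_left_cancel h
    · intro n hn
      have hn' : ¬ n < N := fun h => hn (by simp [h])
      refine ⟨⟨n - N, ne_of_gt (by positivity)⟩, ?_⟩
      show N + (n - N) = n
      omega
    · rintro ⟨n, _⟩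
      simp [Nat.not_lt.2 (Nat.le_add_right N n)]
  rw [h2, h1]; ring

lemma dist_le_tail (N : ℕ) (x y : Tinf) (h : ∀ n < N, x n = y n) :
    dist x y ≤ 2 * (1/2)^N := by
  rw [dist_eq, ← tsum_tail N]
  apply Summable.tsum_le_tsum _ (summable_min x y)
  · apply Summable.of_nonneg_of_le (fun i => by positivity)
      (fun i => by split <;> [positivity; exact le_rfl]) summable_geometric_two
  · intro n
    by_cases hn : n < N
    · simp only [hn, if_pos]
      rw [h n hn, dist_self]
      simp [min_le_right]
    · simp only [hn, if_neg, not_false_iff]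
      exact min_le_left _ _

lemma dist_le_of_coord (N : ℕ) (δ : ℝ) (hδ : 0 ≤ δ) (x y : Tinf)
    (h1 : ∀ n < N, dist (x n) (y n) ≤ δ) (h2 : ∀ n, N ≤ n → x n = y n) :
    dist x y ≤ N * δ := by
  rw [dist_eq]
  have hsum : ∑' n : ℕ, (if n < N then δ else 0) = N * δ := by
    rw [tsum_eq_sum (s := Finset.range N) (fun b hb => if_neg (by simpa using hb))]
    rw [Finset.sum_congr rfl (fun b hb => if_pos (Finset.mem_range.mp hb))]
    simp [mul_comm]
  rw [← hsum]
  apply Summable.tsum_le_tsum _ (summable_min x y)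
  · exact summable_of_ne_finset_zero (s := Finset.range N)
      (fun b hb => if_neg (by simpa using hb))
  · intro n
    by_cases hn : n < N
    · simp only [hn, if_pos]
      exact le_trans (min_le_right _ _) (h1 n hn)
    · simp only [hn, if_neg, not_false_iff]
      rw [h2 n (Nat.not_lt.1 hn), dist_self]
      simp [min_le_right]

lemma circle_approx (y : AddCircle (1:ℝ)) (q : ℕ) (hq : 0 < q) (δ : ℝ)
    (h : ‖q • y‖ ≤ δ) :
    ∃ x : AddCircle (1:ℝ), q • x = 0 ∧ ∀ c : ℕ, c ≤ q → dist (c • x) (c • y) ≤ δ := by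
  obtain ⟨t, rfl⟩ := QuotientAddGroup.mk_surjective y
  have hq0 : (q : ℝ) ≠ 0 := Nat.cast_ne_zero.2 hq.ne'
  set P : ℤ := round ((q : ℝ) * t) with hP
  have hnorm : |(q:ℝ) * t - P| ≤ δ := by
    have h' : ‖((q • t : ℝ) : AddCircle (1:ℝ))‖ ≤ δ := by
      rw [AddCircle.coe_nsmul]; exact h
    rw [AddCircle.norm_eq] at h'
    simpa [nsmul_eq_mul] using h'
  refine ⟨(((P : ℝ)/q : ℝ) : AddCircle (1:ℝ)), ?_, ?_⟩
  · rw [← AddCircle.coe_nsmul, nsmul_eq_mul, mul_div_cancel₀ _ hq0,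
      AddCircle.coe_eq_zero_iff]
    exact ⟨P, by simp⟩
  · intro c hc
    rw [← AddCircle.coe_nsmul, ← AddCircle.coe_nsmul, dist_eq_norm, ← AddCircle.coe_sub]
    have he : (c • ((P:ℝ)/q) - c • t : ℝ) = ((c:ℝ)/q) * (P - q * t) := by
      simp only [nsmul_eq_mul]; field_simp
    calc ‖((c • ((P:ℝ)/q) - c • t : ℝ) : AddCircle (1:ℝ))‖
        ≤ |(c • ((P:ℝ)/q) - c • t : ℝ)| := by
          simpa using QuotientAddGroup.norm_mk_le_norm (S := AddSubgroup.zmultiples (1:ℝ))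
            (m := (c • ((P:ℝ)/q) - c • t : ℝ))
      _ = ((c:ℝ)/q) * |(P:ℝ) - q * t| := by
          rw [he, abs_mul, abs_of_nonneg (by positivity)]
      _ ≤ 1 * |(P:ℝ) - q * t| := by
          apply mul_le_mul_of_nonneg_right _ (abs_nonneg _)
          rw [div_le_one (by positivity)]
          exact_mod_cast hc
      _ = |(q:ℝ) * t - P| := by rw [one_mul, abs_sub_comm]
      _ ≤ δ := hnorm

lemma exists_smul_close (G : AddSubgroup Tinf) (hG : IsCompact (G : Set Tinf))
    {y : Tinf} (hy : y ∈ G) {δ : ℝ} (hδ : 0 < δ) :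
    ∃ q : ℕ, 0 < q ∧ dist (q • y) 0 < δ := by
  classical
  obtain ⟨t, hts, htf, hcov⟩ := finite_cover_balls_of_compact hG (half_pos hδ)
  have hmem : ∀ k : ℕ, ∃ c ∈ t, k • y ∈ ball c (δ/2) := by
    intro k
    have : (k • y) ∈ (G : Set Tinf) := nsmul_mem hy k
    simpa using hcov this
  choose c hct hcb using hmem
  obtain ⟨k₁, -, k₂, -, hne, hceq⟩ :=
    Set.infinite_univ.exists_ne_map_eq_of_mapsTo
      (f := c) (fun k _ => hct k) htf
  wlog hlt : k₁ < k₂ generalizing k₁ k₂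
  · exact this k₂ k₁ hne.symm hceq.symm (by omega)
  refine ⟨k₂ - k₁, by omega, ?_⟩
  have hd : dist (k₂ • y) (k₁ • y) < δ := by
    calc dist (k₂ • y) (k₁ • y) ≤ dist (k₂ • y) (c k₂) + dist (c k₁) (k₁ • y) := by
          rw [hceq]; exact dist_triangle _ _ _
      _ < δ/2 + δ/2 := by
          apply add_lt_add (mem_ball.1 (hcb k₂)) _
          rw [dist_comm]; exact mem_ball.1 (hcb k₁)
      _ = δ := add_halves δ
  have key : dist ((k₂ - k₁) • y) 0 = dist (k₂ • y) (k₁ • y) := by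
    have h2 : k₁ • y + (k₂ - k₁) • y = k₂ • y := by
      rw [← add_nsmul]
      congr 1
      omega
    rw [← dist_add_left_pi (k₁ • y), h2, add_zero]
  rwa [key]

lemma zsmul_reduce {A : Type*} [AddCommGroup A] {x : A} {q : ℕ} (hq : 0 < q)
    (hx : q • x = 0) (c : ℤ) : ∃ c' : ℕ, c' ≤ q ∧ c • x = c' • x := by
  refine ⟨(c % q).toNat, ?_, ?_⟩
  · have := Int.emod_lt_of_pos c (by exact_mod_cast hq : (0:ℤ) < q)
    omega
  · have hsplit : c = (q : ℤ) * (c / q) + c % q := (Int.mul_ediv_add_emod c q).symm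
    have hnn : 0 ≤ c % q := Int.emod_nonneg c (by exact_mod_cast hq.ne')
    calc c • x = ((q : ℤ) * (c / q)) • x + (c % q) • x := by
          rw [← add_zsmul, ← hsplit]
      _ = (c / q) • ((q:ℤ) • x) + (c % q) • x := by
          rw [mul_comm, mul_zsmul]
      _ = (c % q) • x := by
          rw [show ((q:ℤ) • x) = q • x from natCast_zsmul x q, hx, smul_zero, zero_add]
      _ = ((c % q).toNat : ℤ) • x := by rw [Int.toNat_of_nonneg hnn]
      _ = (c % q).toNat • x := natCast_zsmul x _

lemma closure_dist (G : AddSubgroup Tinf) (η : ℝ) (hη : 0 ≤ η) :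
    ∀ s : Finset Tinf, (∀ x ∈ s, ∀ c : ℤ, ∃ g ∈ G, dist (c • x) g ≤ η) →
    ∀ f ∈ AddSubgroup.closure (s : Set Tinf), ∃ g ∈ G, dist f g ≤ s.card * η := by
  classical
  intro s
  induction s using Finset.induction_on with
  | empty =>
      intro _ f hf
      rw [Finset.coe_empty, AddSubgroup.closure_empty, AddSubgroup.mem_bot] at hf
      exact ⟨0, zero_mem _, by simp [hf]⟩
  | @insert a s ha ih =>
      intro hs f hf
      rw [Finset.coe_insert, Set.insert_eq, AddSubgroup.closure_union] at hf
      obtain ⟨u, hu, v, hv, rfl⟩ := AddSubgroup.mem_sup.mp hf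
      obtain ⟨n, rfl⟩ := AddSubgroup.mem_closure_singleton.mp hu
      obtain ⟨gu, hgu, hdu⟩ := hs a (Finset.mem_insert_self a s) n
      obtain ⟨gv, hgv, hdv⟩ := ih (fun x hx c => hs x (Finset.mem_insert_of_mem hx) c) v hv
      refine ⟨gu + gv, add_mem hgu hgv, ?_⟩
      calc dist (n • a + v) (gu + gv) ≤ dist (n • a) gu + dist v gv := dist_add_add_le _ _ _ _
        _ ≤ η + s.card * η := add_le_add hdu hdv
        _ = (insert a s).card * η := by
            rw [Finset.card_insert_of_notMem ha]
            push_cast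
            ring

lemma finite_torsion (Q : ℕ) (hQ : 0 < Q) :
    {z : AddCircle (1:ℝ) | Q • z = 0}.Finite := by
  haveI : Fact ((0:ℝ) < 1) := ⟨zero_lt_one⟩
  have hsub : {z : AddCircle (1:ℝ) | Q • z = 0}
      ⊆ ⋃ d ∈ Finset.Icc 1 Q, {z : AddCircle (1:ℝ) | addOrderOf z = d} := by
    intro z hz
    have hfin : IsOfFinAddOrder z := isOfFinAddOrder_iff_nsmul_eq_zero.2 ⟨Q, hQ, hz⟩
    have h1 : addOrderOf z ∣ Q := addOrderOf_dvd_of_nsmul_eq_zero hz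
    simp only [Set.mem_iUnion, Finset.mem_Icc]
    exact ⟨addOrderOf z, ⟨⟨hfin.addOrderOf_pos, Nat.le_of_dvd hQ h1⟩, rfl⟩⟩
  refine Set.Finite.subset (Set.Finite.biUnion (Finset.Icc 1 Q).finite_toSet
    (fun d hd => ?_)) hsub
  have hd1 : 0 < d := by
    simp only [Finset.coe_Icc, Set.mem_Icc] at hd
    omega
  exact AddCircle.finite_setOfPred_addOrderOf_eq (p := (1:ℝ)) hd1

def Lam (Q N : ℕ) : AddSubgroup Tinf where
  carrier := {x | Q • x = 0 ∧ ∀ n, N ≤ n → x n = 0}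
  zero_mem' := ⟨smul_zero _, fun n _ => rfl⟩
  add_mem' := by
    rintro a b ⟨ha1, ha2⟩ ⟨hb1, hb2⟩
    refine ⟨by rw [smul_add, ha1, hb1, add_zero], fun n hn => ?_⟩
    show a n + b n = 0
    rw [ha2 n hn, hb2 n hn, add_zero]
  neg_mem' := by
    rintro a ⟨h1, h2⟩
    refine ⟨by rw [smul_neg, h1, neg_zero], fun n hn => ?_⟩
    show -(a n) = 0
    rw [h2 n hn, neg_zero]

lemma lam_finite (Q N : ℕ) (hQ : 0 < Q) :
    ((Lam Q N : AddSubgroup Tinf) : Set Tinf).Finite := by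
  classical
  have hS := finite_torsion Q hQ
  have hpi : (Set.pi (Set.univ : Set (Fin N))
      (fun _ => {z : AddCircle (1:ℝ) | Q • z = 0})).Finite := Set.Finite.pi fun _ => hS
  apply Set.Finite.of_finite_image (f := fun (x : Tinf) (j : Fin N) => x j)
    (hpi.subset ?_) ?_
  · rintro w ⟨x, hx, rfl⟩
    intro j _
    have : (Q • x) j = 0 := by rw [hx.1]; rfl
    exact this
  · rintro x hx y hy hxy
    funext n
    by_cases hn : n < N
    · exact congrFun hxy ⟨n, hn⟩
    · rw [hx.2 n (Nat.not_lt.1 hn), hy.2 n (Nat.not_lt.1 hn)]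

def trunc (N : ℕ) : Tinf →+ Tinf where
  toFun x := fun n => if n < N then x n else 0
  map_zero' := by funext n; simp
  map_add' a b := by funext n; by_cases h : n < N <;> simp [h]

lemma trunc_apply (N : ℕ) (x : Tinf) (n : ℕ) : trunc N x n = if n < N then x n else 0 := rfl

lemma trunc_cont (N : ℕ) : Continuous (trunc N) := by
  apply continuous_pi; intro n
  show Continuous fun x : Tinf => if n < N then x n else 0
  by_cases h : n < N
  · simpa [h] using continuous_apply (A := fun _ : ℕ => AddCircle (1:ℝ)) n
  · simpa [h] using continuous_const

end

end FSD

set_option maxHeartbeats 2000000 in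
/-- The finite subgroups of `𝕋^ℕ` with finite support are dense in the space of compact
subgroups of `𝕋^ℕ` with the Hausdorff metric: every compact subgroup is within `ε` (in
Hausdorff distance) of a finite subgroup supported on finitely many coordinates. -/
theorem finite_subgroups_dense (K : AddSubgroup (∀ _ : ℕ, AddCircle (1 : ℝ)))
    (hK : IsCompact (K : Set (∀ _ : ℕ, AddCircle (1 : ℝ)))) (ε : ℝ) (hε : 0 < ε) :
    ∃ F : AddSubgroup (∀ _ : ℕ, AddCircle (1 : ℝ)),
      (F : Set (∀ _ : ℕ, AddCircle (1 : ℝ))).Finite ∧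
      {n : ℕ | ∃ g ∈ F, g n ≠ 0}.Finite ∧
      Metric.hausdorffDist (F : Set (∀ _ : ℕ, AddCircle (1 : ℝ)))
        (K : Set (∀ _ : ℕ, AddCircle (1 : ℝ))) < ε := by
  classical
  have h18 : 0 < ε/8 := by linarith
  obtain ⟨N, hN⟩ : ∃ N : ℕ, 2 * (1/2:ℝ)^N ≤ ε/8 := by
    obtain ⟨N, hN⟩ := exists_pow_lt_of_lt_one (show (0:ℝ) < ε/16 by linarith)
      (by norm_num : (1/2:ℝ) < 1)
    exact ⟨N, by linarith⟩
  set tr : FSD.Tinf →+ FSD.Tinf := FSD.trunc N with htr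
  set G : AddSubgroup FSD.Tinf := K.map tr with hGdef
  have hGc : IsCompact (G : Set FSD.Tinf) := by
    have := hK.image (FSD.trunc_cont N)
    simpa [hGdef, AddSubgroup.coe_map] using this
  have hGsupp : ∀ g ∈ G, ∀ n, N ≤ n → g n = 0 := by
    intro g hg n hn
    obtain ⟨k, hk, rfl⟩ := AddSubgroup.mem_map.mp hg
    simp [htr, FSD.trunc_apply, Nat.not_lt.2 hn]
  have htrdist : ∀ x : FSD.Tinf, dist (tr x) x ≤ ε/8 := by
    intro x
    refine le_trans (FSD.dist_le_tail N _ _ ?_) hN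
    intro n hn
    simp [htr, FSD.trunc_apply, hn]
  obtain ⟨tset, hts, htf, hcov⟩ := finite_cover_balls_of_compact hGc h18
  set T : Finset FSD.Tinf := htf.toFinset with hT
  set r : ℕ := T.card with hr
  set η : ℝ := ε/(8*(r+1)) with hηdef
  have hη0 : 0 < η := by positivity
  have hrη : (r:ℝ) * η ≤ ε/8 := by
    have h1 : (r:ℝ)/(r+1) ≤ 1 := by
      rw [div_le_one (by positivity)]
      linarith
    rw [mul_div_assoc', div_le_div_iff₀ (by positivity) (by norm_num)]
    nlinarith [(Nat.cast_nonneg r : (0:ℝ) ≤ r), hε.le]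
  have hη8 : η ≤ ε/8 := by
    rw [hηdef, div_le_div_iff₀ (by positivity) (by norm_num)]
    nlinarith [(Nat.cast_nonneg r : (0:ℝ) ≤ r), hε.le]
  have key : ∀ y, y ∈ T → ∃ (x : FSD.Tinf) (q : ℕ), 0 < q ∧ q • x = 0 ∧
      (∀ n, N ≤ n → x n = 0) ∧ dist x y ≤ η ∧
      (∀ c : ℤ, ∃ g ∈ G, dist (c • x) g ≤ η) := by
    intro y hyT
    have hyG : y ∈ G := hts (htf.mem_toFinset.mp hyT)
    set δ₀ : ℝ := η/(N+1) with hδ₀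
    have hδ₀0 : 0 < δ₀ := by positivity
    set δ' : ℝ := min δ₀ ((1/2:ℝ)^N) with hδ'
    have hδ'0 : 0 < δ' := lt_min hδ₀0 (by positivity)
    obtain ⟨q, hq, hqd⟩ := FSD.exists_smul_close G hGc hyG hδ'0
    have hcoord : ∀ n, n < N → ‖q • (y n)‖ ≤ δ₀ := by
      intro n hn
      have h1 : dist (q • y) (0:FSD.Tinf) < (1/2:ℝ)^(Encodable.encode n) := by
        simp only [Encodable.encode_nat]
        calc dist (q • y) (0:FSD.Tinf) < δ' := hqd
          _ ≤ (1/2:ℝ)^N := min_le_right _ _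
          _ ≤ (1/2:ℝ)^n := pow_le_pow_of_le_one (by norm_num) (by norm_num) hn.le
      have h2 := PiCountable.dist_le_dist_pi_of_dist_lt (x := q • y) (y := 0) (i := n)
        (by simpa only [one_div] using h1)
      have h3 : dist (q • (y n)) (0 : AddCircle (1:ℝ)) ≤ dist (q • y) (0:FSD.Tinf) := h2
      rw [dist_zero_right] at h3
      exact h3.trans (le_trans hqd.le (min_le_left _ _))
    have hchoice : ∀ n : ℕ, ∃ z : AddCircle (1:ℝ), q • z = 0 ∧ (N ≤ n → z = 0) ∧
        ∀ c : ℕ, c ≤ q → dist (c • z) (c • (y n)) ≤ δ₀ := by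
      intro n
      by_cases hn : n < N
      · obtain ⟨z, hz1, hz2⟩ := FSD.circle_approx (y n) q hq δ₀ (hcoord n hn)
        exact ⟨z, hz1, fun h => absurd h (by omega), hz2⟩
      · refine ⟨0, smul_zero _, fun _ => rfl, fun c hc => ?_⟩
        rw [hGsupp y hyG n (Nat.not_lt.1 hn)]
        simpa using hδ₀0.le
    choose z hz1 hz2 hz3 using hchoice
    have hxq : q • z = 0 := funext fun n => hz1 n
    have hxsupp : ∀ n, N ≤ n → z n = 0 := fun n hn => hz2 n hn
    have hmain : ∀ c : ℕ, c ≤ q → dist (c • z) (c • y) ≤ η := by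
      intro c hc
      have hb := FSD.dist_le_of_coord N δ₀ hδ₀0.le (c • z) (c • y)
        (fun n hn => hz3 n c hc)
        (fun n hn => by
          show c • z n = c • y n
          rw [hxsupp n hn, hGsupp y hyG n hn])
      refine hb.trans ?_
      rw [hδ₀]
      have hNN : (N:ℝ)/(N+1) ≤ 1 := by
        rw [div_le_one (by positivity)]
        linarith
      calc (N:ℝ) * (η/(N+1)) = ((N:ℝ)/(N+1)) * η := by ring
        _ ≤ 1 * η := mul_le_mul_of_nonneg_right hNN hη0.le
        _ = η := one_mul η
    refine ⟨z, q, hq, hxq, hxsupp, ?_, ?_⟩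
    · simpa using hmain 1 hq
    · intro c
      obtain ⟨c', hc', hcc⟩ := FSD.zsmul_reduce hq hxq c
      refine ⟨c' • y, nsmul_mem hyG c', ?_⟩
      rw [hcc]
      exact hmain c' hc'
  choose xf qf hq1 hq2 hq3 hq4 hq5 using key
  set S : Finset FSD.Tinf := T.attach.image (fun y => xf y.1 y.2) with hS
  set Q : ℕ := ∏ y ∈ T.attach, qf y.1 y.2 with hQ
  have hQ0 : 0 < Q := Finset.prod_pos (fun y _ => hq1 y.1 y.2)
  set F : AddSubgroup FSD.Tinf := AddSubgroup.closure (S : Set FSD.Tinf) with hF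
  have hFlam : F ≤ FSD.Lam Q N := by
    rw [hF, AddSubgroup.closure_le]
    rintro w hw
    simp only [hS, Finset.coe_image, Set.mem_image, Finset.mem_coe, Finset.mem_attach] at hw
    obtain ⟨⟨y, hy⟩, -, rfl⟩ := hw
    refine ⟨?_, hq3 y hy⟩
    obtain ⟨m, hm⟩ := Finset.dvd_prod_of_mem (fun y : {a // a ∈ T} => qf y.1 y.2)
      (Finset.mem_attach T ⟨y, hy⟩)
    show Q • xf y hy = 0
    rw [hQ, hm, mul_nsmul, hq2 y hy, smul_zero]
  have hFfin : (F : Set FSD.Tinf).Finite := (FSD.lam_finite Q N hQ0).subset hFlam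
  have hFsupp : {n : ℕ | ∃ g ∈ F, g n ≠ 0}.Finite := by
    apply (Set.finite_Iio N).subset
    rintro n ⟨g, hg, hgn⟩
    by_contra h
    exact hgn ((hFlam hg).2 n (Nat.not_lt.1 (by simpa [Set.mem_Iio] using h)))
  refine ⟨F, hFfin, hFsupp, ?_⟩
  have hbound : Metric.hausdorffDist (F : Set FSD.Tinf) (K : Set FSD.Tinf) ≤ ε/2 := by
    have hSprop : ∀ w ∈ S, ∀ c : ℤ, ∃ g ∈ G, dist (c • w) g ≤ η := by
      intro w hw c
      simp only [hS, Finset.mem_image, Finset.mem_attach] at hw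
      obtain ⟨⟨y, hy⟩, -, rfl⟩ := hw
      exact hq5 y hy c
    apply Metric.hausdorffDist_le_of_mem_dist (by linarith)
    · intro f hf
      obtain ⟨g, hgG, hfg⟩ := FSD.closure_dist G η hη0.le S hSprop f hf
      obtain ⟨k, hkK, hkg⟩ := AddSubgroup.mem_map.mp hgG
      refine ⟨k, hkK, ?_⟩
      have h1 : dist g k ≤ ε/8 := by rw [← hkg]; exact htrdist k
      have h2 : (S.card : ℝ) * η ≤ ε/8 := by
        have hcard : S.card ≤ r := le_trans Finset.card_image_le
          (le_of_eq (by simp [hr, Finset.card_attach]))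
        calc (S.card:ℝ)*η ≤ (r:ℝ) * η := by
              apply mul_le_mul_of_nonneg_right _ hη0.le
              exact_mod_cast hcard
          _ ≤ ε/8 := hrη
      calc dist f k ≤ dist f g + dist g k := dist_triangle _ _ _
        _ ≤ ε/8 + ε/8 := add_le_add (hfg.trans h2) h1
        _ ≤ ε/2 := by linarith
    · intro k hkK
      have hgG : tr k ∈ G := AddSubgroup.mem_map.mpr ⟨k, hkK, rfl⟩
      have hgcov := hcov hgG
      simp only [Set.mem_iUnion] at hgcov
      obtain ⟨y, hyt, hby⟩ := hgcov
      have hyT : y ∈ T := htf.mem_toFinset.2 hyt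
      have hxS : xf y hyT ∈ S := Finset.mem_image.2 ⟨⟨y, hyT⟩, Finset.mem_attach _ _, rfl⟩
      refine ⟨xf y hyT, AddSubgroup.subset_closure hxS, ?_⟩
      calc dist k (xf y hyT) ≤ dist k (tr k) + dist (tr k) y + dist y (xf y hyT) :=
            dist_triangle4 _ _ _ _
        _ ≤ ε/8 + ε/8 + η := by
            refine add_le_add (add_le_add ?_ ?_) ?_
            · rw [dist_comm]; exact htrdist k
            · exact (Metric.mem_ball.1 hby).le
            · rw [dist_comm]; exact hq4 y hyT
        _ ≤ ε/2 := by linarith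
  exact lt_of_le_of_lt hbound (by linarith)
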